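/- Let f be a holomorphic (or C^∞) function on [a, a+mz] along the ray parametrized by t ↦ a + tz, t ∈ [0,m], with a ∈ ℂ, z ∈ ℂ∖{0}, m ∈ ℕ, R ∈ ℕ. Then Σ_{n=0}^{m} f(nz+a) = (1/z)∫_a^{a+mz} f(x)dx + (f(mz+a)+f(a))/2 + Σ_{r=1}^{R} (B_{2r} z^{2r-1}/(2r)!)(f^{(2r-1)}(mz+a) - f^{(2r-1)}(a)) + E, where |E| ≤ C·|z|^{2R}·∫_a^{a+mz} |f^{(2R+1)}(x)| |dx| for an absolute constant C depending only on R. -/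

import Mathlib

open Complex intervalIntegral

noncomputable def emP (k : ℕ) : Polynomial ℂ := (Polynomial.bernoulli k).map (algebraMap ℚ ℂ)

lemma emP_eval_zero (k : ℕ) : (emP k).eval 0 = (bernoulli k : ℂ) := by
  rw [emP, Polynomial.eval_zero_map, Polynomial.bernoulli_eval_zero, eq_ratCast]

lemma emP_eval_one (k : ℕ) : (emP k).eval 1 = (bernoulli' k : ℂ) := by
  rw [emP, Polynomial.eval_one_map, Polynomial.bernoulli_eval_one, eq_ratCast]

lemma emP_zero : emP 0 = 1 := by
  simp [emP, Polynomial.bernoulli_zero]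

lemma emP_deriv_eval (k : ℕ) (w : ℂ) :
    (emP (k + 1)).derivative.eval w = ((k : ℂ) + 1) * (emP k).eval w := by
  rw [emP, Polynomial.derivative_map, Polynomial.derivative_bernoulli_add_one]
  push_cast
  simp [Polynomial.map_mul, emP]

lemma emP_hasDerivAt (k : ℕ) (c : ℂ) (x : ℝ) :
    HasDerivAt (fun t : ℝ => (emP (k + 1)).eval ((t : ℂ) - c))
      (((k : ℂ) + 1) * (emP k).eval ((x : ℂ) - c)) x := by
  have h1 : HasDerivAt (fun w : ℂ => (emP (k + 1)).eval (w - c))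
      (((k : ℂ) + 1) * (emP k).eval ((x : ℂ) - c)) (x : ℂ) := by
    have h0 := ((emP (k + 1)).hasDerivAt ((x : ℂ) - c)).comp (x : ℂ)
      ((hasDerivAt_id ((x : ℂ))).sub_const c)
    simp [emP_deriv_eval] at h0; exact h0
  exact h1.comp_ofReal

lemma emP_continuous (k : ℕ) (c : ℂ) :
    Continuous fun t : ℝ => (emP k).eval ((t : ℂ) - c) :=
  (emP k).continuous.comp (continuous_ofReal.sub continuous_const)

noncomputable def emJ (F : ℕ → ℝ → ℂ) (x : ℝ) (K : ℕ) : ℂ :=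
  (1 / (K.factorial : ℂ)) * ∫ t in x..(x + 1), (emP K).eval ((t : ℂ) - (x : ℂ)) * F K t

section
variable {F : ℕ → ℝ → ℂ} {x : ℝ}
  (hd : ∀ k, ∀ t ∈ Set.Icc x (x + 1), HasDerivAt (F k) (F (k + 1) t) t)
include hd

lemma emF_cont (k : ℕ) : ContinuousOn (F k) (Set.Icc x (x + 1)) :=
  fun t ht => ((hd k t ht).continuousAt).continuousWithinAt

lemma emF_intInt (k : ℕ) : IntervalIntegrable (F k) MeasureTheory.volume x (x + 1) := by
  apply ContinuousOn.intervalIntegrable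
  rw [Set.uIcc_of_le (by linarith : x ≤ x + 1)]
  exact emF_cont hd k

lemma em_parts (K : ℕ) :
    ∫ t in x..(x + 1), (emP (K + 1)).eval ((t : ℂ) - x) * F (K + 1) t
      = (emP (K + 1)).eval 1 * F K (x + 1) - (emP (K + 1)).eval 0 * F K x
        - ∫ t in x..(x + 1), (((K : ℂ) + 1) * (emP K).eval ((t : ℂ) - x)) * F K t := by
  have huIcc : Set.uIcc x (x + 1) = Set.Icc x (x + 1) := Set.uIcc_of_le (by linarith)
  have h := intervalIntegral.integral_mul_deriv_eq_deriv_mul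
    (u := fun t : ℝ => (emP (K + 1)).eval ((t : ℂ) - x))
    (u' := fun t : ℝ => ((K : ℂ) + 1) * (emP K).eval ((t : ℂ) - x))
    (v := F K) (v' := F (K + 1)) (a := x) (b := x + 1)
    (fun t _ => emP_hasDerivAt K x t)
    (fun t ht => hd K t (huIcc ▸ ht))
    (Continuous.intervalIntegrable (by exact continuous_const.mul (emP_continuous K x)) _ _)
    (emF_intInt hd (K + 1))
  have e1 : ((x : ℂ) + 1) - x = 1 := by ring
  have e0 : (x : ℂ) - x = 0 := by ring
  rw [h]
  push_cast
  rw [e1, e0]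

lemma emJ_base :
    ∫ t in x..(x + 1), F 0 t = (F 0 x + F 0 (x + 1)) / 2 - emJ F x 1 := by
  have h := em_parts hd 0
  have h1 : (emP 1).eval 1 = (1 / 2 : ℂ) := by
    rw [emP_eval_one]; norm_num [bernoulli'_one]
  have h0 : (emP 1).eval 0 = (-(1 / 2) : ℂ) := by
    rw [emP_eval_zero]; norm_num [bernoulli_one]
  rw [h1, h0] at h
  have h2 : ∫ t in x..(x + 1), (((0:ℕ) : ℂ) + 1) * (emP 0).eval ((t : ℂ) - x) * F 0 t
      = ∫ t in x..(x + 1), F 0 t := by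
    apply intervalIntegral.integral_congr
    intro t _
    simp [emP_zero]
  rw [h2] at h
  rw [emJ]
  simp only [Nat.factorial_one, Nat.cast_one]
  rw [h]
  push_cast
  ring

lemma emJ_rec (K : ℕ) (hK : K ≠ 0) :
    emJ F x K = ((bernoulli (K + 1) : ℂ) / ((K + 1).factorial : ℂ)) * (F K (x + 1) - F K x)
      - emJ F x (K + 1) := by
  have h := em_parts hd K
  have h1 : (emP (K + 1)).eval 1 = (bernoulli (K + 1) : ℂ) := by
    rw [emP_eval_one, bernoulli_eq_bernoulli'_of_ne_one (by omega)]
  rw [h1, emP_eval_zero] at h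
  have hfac : ((K + 1).factorial : ℂ) = ((K : ℂ) + 1) * (K.factorial : ℂ) := by
    rw [Nat.factorial_succ]; push_cast; ring
  have hfK : (K.factorial : ℂ) ≠ 0 := by exact_mod_cast K.factorial_ne_zero
  have hfK1 : ((K : ℂ) + 1) ≠ 0 := Nat.cast_add_one_ne_zero K
  have hmul : ∫ t in x..(x + 1), (((K : ℂ) + 1) * (emP K).eval ((t : ℂ) - x)) * F K t
      = ((K : ℂ) + 1) * ∫ t in x..(x + 1), (emP K).eval ((t : ℂ) - x) * F K t := by
    rw [← intervalIntegral.integral_const_mul]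
    apply intervalIntegral.integral_congr
    intro t _; ring
  rw [hmul] at h
  rw [emJ, emJ, h, hfac]
  field_simp
  ring

end

section
variable {F : ℕ → ℝ → ℂ} {x : ℝ}
  (hd : ∀ k, ∀ t ∈ Set.Icc x (x + 1), HasDerivAt (F k) (F (k + 1) t) t)
include hd

lemma em_interval (R : ℕ) :
    (F 0 x + F 0 (x + 1)) / 2 - ∫ t in x..(x + 1), F 0 t
      = (∑ r ∈ Finset.Icc 1 R, ((bernoulli (2 * r) : ℂ) / ((2 * r).factorial : ℂ)) *
          (F (2 * r - 1) (x + 1) - F (2 * r - 1) x)) + emJ F x (2 * R + 1) := by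
  induction R with
  | zero =>
    rw [emJ_base hd]
    norm_num
  | succ R ih =>
    rw [ih, Finset.sum_Icc_succ_top (by omega : 1 ≤ R + 1)]
    have h1 := emJ_rec hd (2 * R + 1) (by omega)
    have h2 := emJ_rec hd (2 * R + 2) (by omega)
    have hodd : (bernoulli (2 * R + 2 + 1) : ℂ) = 0 := by
      rw [bernoulli_eq_bernoulli'_of_ne_one (by omega),
        bernoulli'_eq_zero_of_odd ⟨R + 1, by ring⟩ (by omega)]
      simp
    have e1 : 2 * (R + 1) = 2 * R + 2 := by omega
    have e2 : 2 * R + 2 - 1 = 2 * R + 1 := by omega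
    have e4 : 2 * R + 1 + 1 = 2 * R + 2 := by omega
    rw [e1, e2, h1, e4, h2, hodd]
    ring

lemma emJ_bound (R : ℕ) (M : ℝ)
    (hM : ∀ s : ℝ, s ∈ Set.Icc (0 : ℝ) 1 → ‖(emP (2 * R + 1)).eval ((s : ℝ) : ℂ)‖ ≤ M) :
    ‖emJ F x (2 * R + 1)‖
      ≤ M / ((2 * R + 1).factorial : ℝ) * ∫ t in x..(x + 1), ‖F (2 * R + 1) t‖ := by
  have hxx : x ≤ x + 1 := by linarith
  have hcont : ContinuousOn (F (2 * R + 1)) (Set.Icc x (x + 1)) := emF_cont hd _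
  have hci : IntervalIntegrable (fun t => ‖(emP (2 * R + 1)).eval ((t : ℂ) - x) * F (2 * R + 1) t‖)
      MeasureTheory.volume x (x + 1) := by
    apply ContinuousOn.intervalIntegrable
    rw [Set.uIcc_of_le hxx]
    exact (((emP_continuous (2 * R + 1) x).continuousOn.mul hcont)).norm
  have hci2 : IntervalIntegrable (fun t => M * ‖F (2 * R + 1) t‖)
      MeasureTheory.volume x (x + 1) := by
    apply ContinuousOn.intervalIntegrable
    rw [Set.uIcc_of_le hxx]
    exact (continuousOn_const.mul hcont.norm)
  have h1 : ‖∫ t in x..(x + 1), (emP (2 * R + 1)).eval ((t : ℂ) - x) * F (2 * R + 1) t‖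
      ≤ ∫ t in x..(x + 1), M * ‖F (2 * R + 1) t‖ := by
    refine le_trans (intervalIntegral.norm_integral_le_integral_norm hxx) ?_
    refine intervalIntegral.integral_mono_on hxx hci hci2 ?_
    intro t ht
    rw [norm_mul]
    apply mul_le_mul_of_nonneg_right _ (norm_nonneg _)
    have harg : ((t : ℂ) - x) = (((t - x : ℝ)) : ℂ) := by push_cast; ring
    rw [harg]
    exact hM (t - x) ⟨by linarith [ht.1], by linarith [ht.2]⟩
  have hnorm : ‖(1 : ℂ) / ((2 * R + 1).factorial : ℂ)‖ = 1 / ((2 * R + 1).factorial : ℝ) := by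
    rw [norm_div, norm_one, Complex.norm_natCast]
  rw [intervalIntegral.integral_const_mul] at h1
  rw [emJ, norm_mul, hnorm]
  calc (1 / ((2 * R + 1).factorial : ℝ)) *
        ‖∫ t in x..(x + 1), (emP (2 * R + 1)).eval ((t : ℂ) - x) * F (2 * R + 1) t‖
      ≤ (1 / ((2 * R + 1).factorial : ℝ)) * (M * ∫ t in x..(x + 1), ‖F (2 * R + 1) t‖) :=
        mul_le_mul_of_nonneg_left h1 (by positivity)
    _ = M / ((2 * R + 1).factorial : ℝ) * ∫ t in x..(x + 1), ‖F (2 * R + 1) t‖ := by ring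

end

section
variable {F : ℕ → ℝ → ℂ} {m : ℕ}
  (hd : ∀ k, ∀ t ∈ Set.Icc (0 : ℝ) (m : ℝ), HasDerivAt (F k) (F (k + 1) t) t)
include hd

lemma em_hdn {n : ℕ} (hn : n < m) :
    ∀ k, ∀ t ∈ Set.Icc (n : ℝ) ((n : ℝ) + 1), HasDerivAt (F k) (F (k + 1) t) t := by
  intro k t ht
  have h1 : ((n : ℝ) + 1) ≤ (m : ℝ) := by exact_mod_cast Nat.succ_le_of_lt hn
  exact hd k t ⟨le_trans (by positivity) ht.1, le_trans ht.2 h1⟩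

lemma em_sum (R : ℕ) :
    (∑ n ∈ Finset.range (m + 1), F 0 (n : ℝ)) -
      ((∫ t in (0 : ℝ)..(m : ℝ), F 0 t) + (F 0 (m : ℝ) + F 0 0) / 2 +
        ∑ r ∈ Finset.Icc 1 R, ((bernoulli (2 * r) : ℂ) / ((2 * r).factorial : ℂ)) *
          (F (2 * r - 1) (m : ℝ) - F (2 * r - 1) 0))
    = ∑ n ∈ Finset.range m, emJ F (n : ℝ) (2 * R + 1) := by
  have hcast : ∀ n : ℕ, (((n + 1 : ℕ)) : ℝ) = (n : ℝ) + 1 := fun n => by push_cast; ring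
  have key : ∀ n ∈ Finset.range m,
      (F 0 (n : ℝ) + F 0 ((n : ℝ) + 1)) / 2 - ∫ t in (n : ℝ)..((n : ℝ) + 1), F 0 t
      = (∑ r ∈ Finset.Icc 1 R, ((bernoulli (2 * r) : ℂ) / ((2 * r).factorial : ℂ)) *
          (F (2 * r - 1) ((n : ℝ) + 1) - F (2 * r - 1) (n : ℝ))) + emJ F (n : ℝ) (2 * R + 1) :=
    fun n hn => em_interval (em_hdn hd (Finset.mem_range.mp hn)) R
  have hsum := Finset.sum_congr rfl key
  rw [Finset.sum_sub_distrib, Finset.sum_add_distrib] at hsum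
  -- the averages
  have havg : ∑ n ∈ Finset.range m, (F 0 (n : ℝ) + F 0 ((n : ℝ) + 1)) / 2
      = (∑ n ∈ Finset.range (m + 1), F 0 (n : ℝ)) - (F 0 (0 : ℝ) + F 0 (m : ℝ)) / 2 := by
    have h1 : ∑ n ∈ Finset.range m, F 0 (n : ℝ)
        = (∑ n ∈ Finset.range (m + 1), F 0 (n : ℝ)) - F 0 (m : ℝ) := by
      rw [Finset.sum_range_succ]; ring
    have h2 : ∑ n ∈ Finset.range m, F 0 ((n : ℝ) + 1)
        = (∑ n ∈ Finset.range (m + 1), F 0 (n : ℝ)) - F 0 (0 : ℝ) := by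
      have h3 := Finset.sum_range_succ' (fun n : ℕ => F 0 (n : ℝ)) m
      simp only [hcast] at h3
      rw [h3]
      simp
    have h4 : ∑ n ∈ Finset.range m, (F 0 (n : ℝ) + F 0 ((n : ℝ) + 1)) / 2
        = ((∑ n ∈ Finset.range m, F 0 (n : ℝ)) + ∑ n ∈ Finset.range m, F 0 ((n : ℝ) + 1)) / 2 := by
      rw [← Finset.sum_add_distrib, ← Finset.sum_div]
    rw [h4, h1, h2]; ring
  -- the integrals
  have hint : ∑ n ∈ Finset.range m, ∫ t in (n : ℝ)..((n : ℝ) + 1), F 0 t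
      = ∫ t in (0 : ℝ)..(m : ℝ), F 0 t := by
    have h5 := intervalIntegral.sum_integral_adjacent_intervals (a := fun k : ℕ => (k : ℝ))
      (f := F 0) (μ := MeasureTheory.volume) (n := m) ?_
    · simp only [hcast] at h5
      rw [h5]; norm_num
    · intro k hk
      show IntervalIntegrable (F 0) MeasureTheory.volume (k : ℝ) (((k + 1 : ℕ)) : ℝ)
      rw [hcast k]
      exact emF_intInt (em_hdn hd hk) 0
  -- the telescoping sums
  have htel : ∑ n ∈ Finset.range m, (∑ r ∈ Finset.Icc 1 R,
        ((bernoulli (2 * r) : ℂ) / ((2 * r).factorial : ℂ)) *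
          (F (2 * r - 1) ((n : ℝ) + 1) - F (2 * r - 1) (n : ℝ)))
      = ∑ r ∈ Finset.Icc 1 R, ((bernoulli (2 * r) : ℂ) / ((2 * r).factorial : ℂ)) *
          (F (2 * r - 1) (m : ℝ) - F (2 * r - 1) (0 : ℝ)) := by
    rw [Finset.sum_comm]
    refine Finset.sum_congr rfl fun r _ => ?_
    rw [← Finset.mul_sum]
    congr 1
    have h6 := Finset.sum_range_sub (fun n : ℕ => F (2 * r - 1) (n : ℝ)) m
    simp only [hcast] at h6
    rw [h6]
    norm_num
  rw [havg, hint, htel] at hsum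
  linear_combination hsum

lemma em_bound (R : ℕ) (M : ℝ)
    (hM : ∀ s : ℝ, s ∈ Set.Icc (0 : ℝ) 1 → ‖(emP (2 * R + 1)).eval ((s : ℝ) : ℂ)‖ ≤ M) :
    ‖(∑ n ∈ Finset.range (m + 1), F 0 (n : ℝ)) -
      ((∫ t in (0 : ℝ)..(m : ℝ), F 0 t) + (F 0 (m : ℝ) + F 0 0) / 2 +
        ∑ r ∈ Finset.Icc 1 R, ((bernoulli (2 * r) : ℂ) / ((2 * r).factorial : ℂ)) *
          (F (2 * r - 1) (m : ℝ) - F (2 * r - 1) 0))‖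
    ≤ M / ((2 * R + 1).factorial : ℝ) * ∫ t in (0 : ℝ)..(m : ℝ), ‖F (2 * R + 1) t‖ := by
  have hcast : ∀ n : ℕ, (((n + 1 : ℕ)) : ℝ) = (n : ℝ) + 1 := fun n => by push_cast; ring
  rw [em_sum hd R]
  have hint : ∑ n ∈ Finset.range m, ∫ t in (n : ℝ)..((n : ℝ) + 1), ‖F (2 * R + 1) t‖
      = ∫ t in (0 : ℝ)..(m : ℝ), ‖F (2 * R + 1) t‖ := by
    have h5 := intervalIntegral.sum_integral_adjacent_intervals (a := fun k : ℕ => (k : ℝ))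
      (f := fun t => ‖F (2 * R + 1) t‖) (μ := MeasureTheory.volume) (n := m) ?_
    · simp only [hcast] at h5
      rw [h5]; norm_num
    · intro k hk
      show IntervalIntegrable (fun t => ‖F (2 * R + 1) t‖) MeasureTheory.volume (k : ℝ)
        (((k + 1 : ℕ)) : ℝ)
      rw [hcast k]
      exact (emF_intInt (em_hdn hd hk) (2 * R + 1)).norm
  calc ‖∑ n ∈ Finset.range m, emJ F (n : ℝ) (2 * R + 1)‖
      ≤ ∑ n ∈ Finset.range m, ‖emJ F (n : ℝ) (2 * R + 1)‖ := norm_sum_le _ _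
    _ ≤ ∑ n ∈ Finset.range m,
          M / ((2 * R + 1).factorial : ℝ) * ∫ t in (n : ℝ)..((n : ℝ) + 1), ‖F (2 * R + 1) t‖ :=
        Finset.sum_le_sum fun n hn =>
          emJ_bound (em_hdn hd (Finset.mem_range.mp hn)) R M hM
    _ = M / ((2 * R + 1).factorial : ℝ) * ∫ t in (0 : ℝ)..(m : ℝ), ‖F (2 * R + 1) t‖ := by
        rw [← Finset.mul_sum, hint]

end

/-- Euler–Maclaurin summation along the ray t ↦ a + tz: for each R there is a constant C
(depending only on R) such that for every a, z ≠ 0, m and every function f holomorphic on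
an open neighbourhood of the segment [a, a + mz],
Σ_{n=0}^m f(nz+a) = (1/z)∫_a^{a+mz} f + (f(mz+a)+f(a))/2
  + Σ_{r=1}^R (B_{2r} z^{2r-1}/(2r)!)(f^{(2r-1)}(mz+a) - f^{(2r-1)}(a)) + E,
with |E| ≤ C |z|^{2R} ∫_a^{a+mz} |f^{(2R+1)}| |dx|. The straight-line integrals are written
via the parametrization x = a + tz, so that (1/z)∫_a^{a+mz} f dx = ∫_0^m f(a+tz) dt and
∫_a^{a+mz} |g| |dx| = |z| ∫_0^m |g(a+tz)| dt. -/
theorem euler_maclaurin_ray (R : ℕ) :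
    ∃ C > 0, ∀ (a z : ℂ) (m : ℕ) (f : ℂ → ℂ) (U : Set ℂ),
      IsOpen U → (∀ t : ℝ, t ∈ Set.Icc (0 : ℝ) (m : ℝ) → a + (t : ℂ) * z ∈ U) →
      DifferentiableOn ℂ f U → z ≠ 0 →
      ‖(∑ n ∈ Finset.range (m + 1), f ((n : ℂ) * z + a)) -
          ((∫ t in (0 : ℝ)..(m : ℝ), f (a + (t : ℂ) * z)) +
            (f ((m : ℂ) * z + a) + f a) / 2 +
            ∑ r ∈ Finset.Icc 1 R,
              ((bernoulli (2 * r) : ℂ) * z ^ (2 * r - 1) / ((2 * r).factorial : ℂ)) *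
                (iteratedDeriv (2 * r - 1) f ((m : ℂ) * z + a) -
                  iteratedDeriv (2 * r - 1) f a))‖ ≤
        C * ‖z‖ ^ (2 * R) *
          (‖z‖ * ∫ t in (0 : ℝ)..(m : ℝ), ‖iteratedDeriv (2 * R + 1) f (a + (t : ℂ) * z)‖) := by
  obtain ⟨M, hM⟩ := (isCompact_Icc : IsCompact (Set.Icc (0 : ℝ) 1)).exists_bound_of_continuousOn
    (((emP (2 * R + 1)).continuous.comp continuous_ofReal).continuousOn)
  have hfactpos : (0 : ℝ) < ((2 * R + 1).factorial : ℝ) := by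
    exact_mod_cast (2 * R + 1).factorial_pos
  refine ⟨(max M 0 + 1) / ((2 * R + 1).factorial : ℝ), div_pos (by positivity) hfactpos, ?_⟩
  intro a z m f U hU hmem hf hz
  set F : ℕ → ℝ → ℂ := fun k t => z ^ k * iteratedDeriv k f (a + (t : ℂ) * z) with hF
  have hA : AnalyticOnNhd ℂ f U := hf.analyticOnNhd hU
  have hAk : ∀ k, AnalyticOnNhd ℂ (iteratedDeriv k f) U := by
    intro k
    induction k with
    | zero => simpa using hA
    | succ k ih => rw [iteratedDeriv_succ]; exact ih.deriv
  have hd : ∀ k, ∀ t ∈ Set.Icc (0 : ℝ) (m : ℝ), HasDerivAt (F k) (F (k + 1) t) t := by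
    intro k t ht
    have hw : a + (t : ℂ) * z ∈ U := hmem t ht
    have h1 : HasDerivAt (iteratedDeriv k f)
        (iteratedDeriv (k + 1) f (a + (t : ℂ) * z)) (a + (t : ℂ) * z) := by
      rw [iteratedDeriv_succ]
      exact ((hAk k) _ hw).differentiableAt.hasDerivAt
    have hin : HasDerivAt (fun w : ℂ => a + w * z) z (t : ℂ) := by
      simpa using ((hasDerivAt_id ((t : ℂ))).mul_const z).const_add a
    have h2 : HasDerivAt (fun w : ℂ => iteratedDeriv k f (a + w * z))
        (iteratedDeriv (k + 1) f (a + (t : ℂ) * z) * z) (t : ℂ) := by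
      have := HasDerivAt.comp (t : ℂ) h1 hin
      exact this
    have h4 := h2.comp_ofReal.const_mul (z ^ k)
    have h5 : F (k + 1) t = z ^ k * (iteratedDeriv (k + 1) f (a + (t : ℂ) * z) * z) := by
      rw [hF]; simp only [pow_succ]; ring
    rw [show F k = fun t : ℝ => z ^ k * iteratedDeriv k f (a + (t : ℂ) * z) from rfl, h5]
    exact h4
  have hM' : ∀ s : ℝ, s ∈ Set.Icc (0 : ℝ) 1 →
      ‖(emP (2 * R + 1)).eval ((s : ℝ) : ℂ)‖ ≤ max M 0 :=
    fun s hs => le_trans (hM s hs) (le_max_left _ _)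
  have hmain := em_bound hd R (max M 0) hM'
  -- rewrite the pieces
  have e1 : ∑ n ∈ Finset.range (m + 1), f ((n : ℂ) * z + a)
      = ∑ n ∈ Finset.range (m + 1), F 0 ((n : ℕ) : ℝ) := by
    refine Finset.sum_congr rfl fun n _ => ?_
    simp [hF, add_comm, mul_comm]
  have e2 : (∫ t in (0 : ℝ)..(m : ℝ), f (a + (t : ℂ) * z)) = ∫ t in (0 : ℝ)..(m : ℝ), F 0 t := by
    refine intervalIntegral.integral_congr fun t _ => ?_
    simp [hF]
  have e3 : (f ((m : ℂ) * z + a) + f a) / 2 = (F 0 ((m : ℕ) : ℝ) + F 0 0) / 2 := by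
    simp [hF, add_comm, mul_comm]
  have e4 : ∑ r ∈ Finset.Icc 1 R,
        ((bernoulli (2 * r) : ℂ) * z ^ (2 * r - 1) / ((2 * r).factorial : ℂ)) *
          (iteratedDeriv (2 * r - 1) f ((m : ℂ) * z + a) - iteratedDeriv (2 * r - 1) f a)
      = ∑ r ∈ Finset.Icc 1 R, ((bernoulli (2 * r) : ℂ) / ((2 * r).factorial : ℂ)) *
          (F (2 * r - 1) ((m : ℕ) : ℝ) - F (2 * r - 1) 0) := by
    refine Finset.sum_congr rfl fun r _ => ?_
    rw [hF]
    simp only [Complex.ofReal_natCast, Complex.ofReal_zero, zero_mul, add_zero]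
    rw [add_comm a ((m : ℂ) * z)]
    ring
  have e5 : (∫ t in (0 : ℝ)..(m : ℝ), ‖F (2 * R + 1) t‖)
      = ‖z‖ ^ (2 * R + 1) * ∫ t in (0 : ℝ)..(m : ℝ), ‖iteratedDeriv (2 * R + 1) f (a + (t : ℂ) * z)‖ := by
    rw [← intervalIntegral.integral_const_mul]
    refine intervalIntegral.integral_congr fun t _ => ?_
    simp [hF, norm_mul]
  rw [e1, e2, e3, e4]
  refine le_trans hmain ?_
  rw [e5]
  have hI : 0 ≤ ∫ t in (0 : ℝ)..(m : ℝ), ‖iteratedDeriv (2 * R + 1) f (a + (t : ℂ) * z)‖ :=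
    intervalIntegral.integral_nonneg (by positivity) fun t _ => norm_nonneg _
  have hle : max M 0 / ((2 * R + 1).factorial : ℝ)
      ≤ (max M 0 + 1) / ((2 * R + 1).factorial : ℝ) := by
    gcongr
    linarith
  calc max M 0 / ((2 * R + 1).factorial : ℝ) *
        (‖z‖ ^ (2 * R + 1) * ∫ t in (0 : ℝ)..(m : ℝ), ‖iteratedDeriv (2 * R + 1) f (a + (t : ℂ) * z)‖)
      ≤ (max M 0 + 1) / ((2 * R + 1).factorial : ℝ) *
        (‖z‖ ^ (2 * R + 1) * ∫ t in (0 : ℝ)..(m : ℝ), ‖iteratedDeriv (2 * R + 1) f (a + (t : ℂ) * z)‖) := by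
        apply mul_le_mul_of_nonneg_right hle (by positivity)
    _ = (max M 0 + 1) / ((2 * R + 1).factorial : ℝ) * ‖z‖ ^ (2 * R) *
        (‖z‖ * ∫ t in (0 : ℝ)..(m : ℝ), ‖iteratedDeriv (2 * R + 1) f (a + (t : ℂ) * z)‖) := by
        rw [pow_succ]; ring
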